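/- Let x be a rational number whose denominator in lowest terms is odd. Then there exist an integer r and a finite list L of integers, each of which is even and has absolute value at least 2, such that x = (r : ℚ) + CF(L). -/

import Mathlib

/-- Continued fraction value: `CF [] = 0`, `CF (b :: T) = 1/(b - CF T)`. -/
def CF : List ℤ → ℚ
  | [] => 0
  | b :: T => 1 / ((b : ℚ) - CF T)

lemma num_divInt_of_coprime (n d : ℤ) (h : Int.gcd n d = 1) :
    (Rat.divInt n d).num = d.sign * n := by
  rw [Rat.num_divInt, Int.gcd_comm, h]
  simp

lemma den_divInt_of_coprime (n d : ℤ) (hd : d ≠ 0) (h : Int.gcd n d = 1) :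
    ((Rat.divInt n d).den : ℤ) = d.natAbs := by
  rw [Rat.den_divInt, if_neg hd, Int.gcd_comm, h]
  simp

lemma parity_contra (y : ℚ) (m : ℤ) (hm0 : m ≠ 0) (hmodd : ¬ Even m)
    (hy : y = ((m : ℚ))⁻¹) : ¬ (Even y.num ∨ Even y.den) := by
  rintro (hp | hp)
  · have h1 : y.num.natAbs = 1 := by
      rw [hy, Rat.inv_intCast_num]
      exact Int.natAbs_sign_of_ne_zero hm0
    obtain ⟨k, hk⟩ := Int.natAbs_even.mpr hp
    omega
  · have hden : y.den = m.natAbs := by rw [hy, Rat.inv_intCast_den, if_neg hm0]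
    rw [hden] at hp
    exact hmodd (Int.natAbs_even.mp hp)

lemma cf_aux : ∀ d : ℕ, ∀ y : ℚ, y.den ≤ d → |y| < 1 → (Even y.num ∨ Even y.den) →
    ∃ L : List ℤ, (∀ c ∈ L, Even c ∧ 2 ≤ |c|) ∧ y = CF L := by
  intro d
  induction d with
  | zero => intro y hle _ _; exact absurd hle (by have := y.pos; omega)
  | succ d ih =>
    intro y hle habs hpar
    by_cases h0 : y = 0
    · exact ⟨[], by simp, by simp [h0, CF]⟩
    set s : ℤ := y.num with hs_def
    set dd : ℤ := (y.den : ℤ) with hdd_def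
    have hs : s ≠ 0 := Rat.num_ne_zero.mpr h0
    have hddpos : 0 < dd := Int.natCast_pos.mpr y.pos
    have hyeq : y = (s : ℚ) / (dd : ℚ) := by exact_mod_cast (Rat.num_div_den y).symm
    have hzabs : 1 < |y⁻¹| := by
      rw [abs_inv]
      have h1 : 0 < |y| := abs_pos.mpr h0
      rw [lt_inv_comm₀ one_pos h1]
      simpa using habs
    set b : ℤ := 2 * round (y⁻¹ / 2) with hb_def
    have hbeven : Even b := ⟨round (y⁻¹ / 2), by ring⟩
    have hb1 : |y⁻¹ - (b : ℚ)| ≤ 1 := by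
      have h := abs_sub_round (y⁻¹ / 2)
      have heq : y⁻¹ - (b : ℚ) = 2 * (y⁻¹ / 2 - round (y⁻¹ / 2)) := by
        push_cast [hb_def]; ring
      rw [heq, abs_mul, abs_of_pos (by norm_num : (0:ℚ) < 2)]
      linarith
    have hbne : (b : ℚ) ≠ 0 := by
      intro h
      rw [h, sub_zero] at hb1
      linarith
    have hb0 : b ≠ 0 := by
      intro h
      exact hbne (by rw [h]; simp)
    have hb2 : 2 ≤ |b| := by
      obtain ⟨k, hk⟩ := hbeven
      rcases abs_cases b with ⟨h1, h2⟩ | ⟨h1, h2⟩ <;> omega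
    set t : ℚ := (b : ℚ) - y⁻¹ with ht_def
    have hbt : (b : ℚ) - t = y⁻¹ := by ring
    have hyinv : y⁻¹ ≠ 0 := inv_ne_zero h0
    have key : ∃ L : List ℤ, (∀ c ∈ L, Even c ∧ 2 ≤ |c|) ∧ t = CF L := by
      by_cases ht0 : t = 0
      · exact ⟨[], by simp, by simp [ht0, CF]⟩
      have hta1 : |t| ≤ 1 := by rw [ht_def, abs_sub_comm]; exact hb1
      have htabs : |t| < 1 := by
        rcases lt_or_eq_of_le hta1 with h | h
        · exact h
        exfalso
        have h1 : t = 1 ∨ t = -1 := (abs_eq (by norm_num : (0:ℚ) ≤ 1)).mp h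
        obtain ⟨j, hj⟩ := hbeven
        rcases h1 with h' | h'
        · have hm : y = (((b - 1 : ℤ)) : ℚ)⁻¹ := by
            rw [ht_def] at h'
            have : y⁻¹ = ((b - 1 : ℤ) : ℚ) := by push_cast; linarith
            rw [← this, inv_inv]
          exact parity_contra y (b - 1) (by omega) (by rintro ⟨k, hk⟩; omega) hm hpar
        · have hm : y = (((b + 1 : ℤ)) : ℚ)⁻¹ := by
            rw [ht_def] at h'
            have : y⁻¹ = ((b + 1 : ℤ) : ℚ) := by push_cast; linarith
            rw [← this, inv_inv]
          exact parity_contra y (b + 1) (by omega) (by rintro ⟨k, hk⟩; omega) hm hpar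
      have hsne : (s : ℚ) ≠ 0 := Int.cast_ne_zero.mpr hs
      have hdne : (dd : ℚ) ≠ 0 := Int.cast_ne_zero.mpr hddpos.ne'
      have htdiv : t = Rat.divInt (b * s - dd) s := by
        rw [Rat.divInt_eq_div, ht_def, hyeq]
        rw [inv_div]
        push_cast
        field_simp
      have hcop : Int.gcd (b * s - dd) s = 1 := by
        have h1 : IsCoprime s dd := by
          rw [Int.isCoprime_iff_gcd_eq_one]
          exact_mod_cast y.reduced
        have h2 : IsCoprime s (-dd + s * b) := (h1.neg_right).add_mul_left_right b
        have h3 : IsCoprime s (b * s - dd) := by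
          have : b * s - dd = -dd + s * b := by ring
          rwa [this]
        rw [Int.gcd_comm]
        exact Int.isCoprime_iff_gcd_eq_one.mp h3
      have htnum : t.num = s.sign * (b * s - dd) := by
        rw [htdiv]
        exact num_divInt_of_coprime _ _ hcop
      have htden : (t.den : ℤ) = s.natAbs := by
        rw [htdiv]
        exact den_divInt_of_coprime _ _ hs hcop
      have hslt : s.natAbs < y.den := by
        have hddQ : (0:ℚ) < (dd : ℚ) := by exact_mod_cast hddpos
        have h1 : |(s : ℚ)| < (dd : ℚ) := by
          rw [hyeq, abs_div, abs_of_pos hddQ, div_lt_one hddQ] at habs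
          exact habs
        have h2 : |s| < dd := by exact_mod_cast h1
        rw [hdd_def] at h2
        rcases abs_cases s with ⟨ha, _⟩ | ⟨ha, _⟩ <;> omega
      have htle : t.den ≤ d := by omega
      have htpar : Even t.num ∨ Even t.den := by
        rcases hpar with hp | hp
        · right
          have h1 : Even s.natAbs := Int.natAbs_even.mpr hp
          obtain ⟨k, hk⟩ := h1
          exact ⟨k, by omega⟩
        · left
          rw [htnum]
          have hdd2 : Even dd := by
            obtain ⟨k, hk⟩ := hp
            exact ⟨(k : ℤ), by rw [hdd_def]; push_cast [hk]; ring⟩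
          have h1 : Even (b * s - dd) := ((hbeven.mul_right s)).sub hdd2
          exact h1.mul_left _
      exact ih t htle htabs htpar
    obtain ⟨L, hL, hCFL⟩ := key
    refine ⟨b :: L, ?_, ?_⟩
    · intro c hc
      rcases List.mem_cons.mp hc with rfl | hc
      · exact ⟨hbeven, hb2⟩
      · exact hL c hc
    · show y = CF (b :: L)
      rw [CF, ← hCFL, hbt, one_div, inv_inv]

lemma num_sub_intCast (x : ℚ) (r : ℤ) : (x - (r : ℚ)).num = x.num - r * x.den := by
  have hdne : ((x.den : ℤ) : ℚ) ≠ 0 := by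
    have := x.pos
    positivity
  have h : x - (r : ℚ) = Rat.divInt (x.num - r * x.den) (x.den : ℤ) := by
    rw [Rat.divInt_eq_div]
    rw [eq_div_iff hdne]
    push_cast
    rw [sub_mul, Rat.mul_den_eq_num]
  have hcop : Int.gcd (x.num - r * (x.den : ℤ)) (x.den : ℤ) = 1 := by
    have h1 : IsCoprime x.num ((x.den : ℤ)) := by
      rw [Int.isCoprime_iff_gcd_eq_one]
      exact_mod_cast x.reduced
    have h2 : IsCoprime ((x.den : ℤ)) (x.num + (x.den : ℤ) * (-r)) :=
      (h1.symm).add_mul_left_right (-r)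
    have h3 : IsCoprime (x.num - r * (x.den : ℤ)) ((x.den : ℤ)) := by
      have he : x.num - r * (x.den : ℤ) = x.num + (x.den : ℤ) * (-r) := by ring
      rw [he]
      exact h2.symm
    exact Int.isCoprime_iff_gcd_eq_one.mp h3
  rw [h, num_divInt_of_coprime _ _ hcop, Int.sign_natCast_of_ne_zero (by have := x.pos; omega),
    one_mul]

theorem exists_even_cf_expansion (x : ℚ) (hx : Odd x.den) :
    ∃ (r : ℤ) (L : List ℤ), (∀ c ∈ L, Even c ∧ 2 ≤ |c|) ∧ x = (r : ℚ) + CF L := by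
  by_cases h1 : x.den = 1
  · refine ⟨x.num, [], by simp, ?_⟩
    show x = (x.num : ℚ) + CF []
    simp [CF, Rat.den_eq_one_iff x |>.mp h1]
  · set f : ℤ := ⌊x⌋ with hf_def
    have hxne : x ≠ (f : ℚ) := by
      intro h
      rw [h] at h1
      simp at h1
    have hfr : 0 < x - (f : ℚ) ∧ x - (f : ℚ) < 1 := by
      constructor
      · have h := Int.floor_le x
        rcases lt_or_eq_of_le h with h' | h'
        · linarith
        · exact absurd h'.symm hxne
      · have := Int.lt_floor_add_one x
        linarith
    set r : ℤ := if Even (x.num - f * x.den) then f else f + 1 with hr_def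
    set y : ℚ := x - (r : ℚ) with hy_def
    have hynum : y.num = x.num - r * x.den := num_sub_intCast x r
    have hypar : Even y.num := by
      rw [hynum, hr_def]
      obtain ⟨m, hm⟩ := hx
      by_cases he : Even (x.num - f * x.den)
      · rwa [if_pos he]
      · rw [if_neg he]
        rcases Int.even_or_odd (x.num - f * x.den) with h | h
        · exact absurd h he
        · obtain ⟨k, hk⟩ := h
          have hring : (f + 1) * (x.den : ℤ) = f * x.den + x.den := by ring
          exact ⟨k - m, by omega⟩
    have hyabs : |y| < 1 := by
      rw [hy_def, hr_def]
      by_cases he : Even (x.num - f * x.den)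
      · rw [if_pos he]
        rw [abs_lt]
        constructor <;> [linarith [hfr.1]; linarith [hfr.2]]
      · rw [if_neg he]
        push_cast
        rw [abs_lt]
        constructor <;> [linarith [hfr.2]; linarith [hfr.1]]
    obtain ⟨L, hL, hCFL⟩ := cf_aux y.den y le_rfl hyabs (Or.inl hypar)
    exact ⟨r, L, hL, by rw [← hCFL, hy_def]; ring⟩
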